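/- Let X, Y, Z be integrable real random variables on a probability space such that Z is independent of X and Z is independent of Y, and such that the products X·Z and Y·Z are integrable. If X ≤_C Y, i.e. E[X] = E[Y] and E[(X−K)⁺] ≤ E[(Y−K)⁺] for every K ∈ ℝ, then X·Z ≤_C Y·Z, i.e. E[X·Z] = E[Y·Z] and E[(X·Z−K)⁺] ≤ E[(Y·Z−K)⁺] for every K ∈ ℝ. -/

import Mathlib

open MeasureTheory ProbabilityTheory Set

private lemma call_integrable {P : Measure ℝ} [IsProbabilityMeasure P]
    (hP : Integrable id P) (c : ℝ) :
    Integrable (fun x : ℝ => max (x - c) 0) P := by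
  have h1 : Integrable (fun x : ℝ => x - c) P := hP.sub (integrable_const c)
  exact h1.sup (integrable_const 0)

private lemma call_scaled_le {P Q : Measure ℝ} [IsProbabilityMeasure P] [IsProbabilityMeasure Q]
    (hP : Integrable id P) (hQ : Integrable id Q)
    (hmean : ∫ x, x ∂P = ∫ x, x ∂Q)
    (hcalls : ∀ c : ℝ, ∫ x, max (x - c) 0 ∂P ≤ ∫ x, max (x - c) 0 ∂Q)
    (z K : ℝ) :
    ∫ x, max (x * z - K) 0 ∂P ≤ ∫ x, max (x * z - K) 0 ∂Q := by
  rcases lt_trichotomy z 0 with hz | hz | hz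
  · -- z < 0 : max (x*z - K) 0 = (-z) * (max (x - K/z) 0 - x + K/z)
    have hne : z ≠ 0 := ne_of_lt hz
    have hid : ∀ x : ℝ, max (x * z - K) 0 = (-z) * (max (x - K/z) 0 - x + K/z) := by
      intro x
      rcases le_total x (K/z) with h | h
      · have h1 : K ≤ x * z := by
          have := mul_le_mul_of_nonpos_right h (le_of_lt hz)
          rwa [div_mul_cancel₀ K hne] at this
        rw [max_eq_left (by linarith), max_eq_right (by linarith)]
        field_simp
        ring
      · have h1 : x * z ≤ K := by
          have := mul_le_mul_of_nonpos_right h (le_of_lt hz)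
          rwa [div_mul_cancel₀ K hne] at this
        rw [max_eq_right (by linarith), max_eq_left (by linarith)]
        field_simp
        ring
    have key : ∀ (R : Measure ℝ) [IsProbabilityMeasure R], Integrable id R →
        ∫ x, max (x * z - K) 0 ∂ R
          = (-z) * ((∫ x, max (x - K/z) 0 ∂ R) - (∫ x, x ∂ R) + K/z) := by
      intro R _ hR
      simp_rw [hid]
      rw [integral_const_mul _ _]
      congr 1
      have hR' : Integrable (fun a : ℝ => a) R := hR
      have i1 : Integrable (fun a : ℝ => max (a - K/z) 0 - a) R :=
        (call_integrable hR (K/z)).sub hR'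
      rw [integral_add i1 (integrable_const (K/z)),
        integral_sub (call_integrable hR (K/z)) hR', integral_const]
      simp
    rw [key P hP, key Q hQ]
    have h1 := hcalls (K/z)
    apply mul_le_mul_of_nonneg_left _ (by linarith : (0:ℝ) ≤ -z)
    linarith [hmean]
  · simp [hz]
  · -- z > 0 : max (x*z - K) 0 = z * max (x - K/z) 0
    have hne : z ≠ 0 := ne_of_gt hz
    have hid : ∀ x : ℝ, max (x * z - K) 0 = z * max (x - K/z) 0 := by
      intro x
      rcases le_total x (K/z) with h | h
      · have h1 : x * z ≤ K := by
          have := mul_le_mul_of_nonneg_right h (le_of_lt hz)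
          rwa [div_mul_cancel₀ K hne] at this
        rw [max_eq_right (by linarith), max_eq_right (by linarith)]
        ring
      · have h1 : K ≤ x * z := by
          have := mul_le_mul_of_nonneg_right h (le_of_lt hz)
          rwa [div_mul_cancel₀ K hne] at this
        rw [max_eq_left (by linarith), max_eq_left (by linarith)]
        field_simp
    simp_rw [hid]
    rw [integral_const_mul _ _, integral_const_mul _ _]
    exact mul_le_mul_of_nonneg_left (hcalls (K/z)) (le_of_lt hz)

/-- **The convex order is preserved by multiplication with an independent factor
(Lemma A.2).**  If `X ≤_C Y` and `Z` is independent of `X` and of `Y`, with all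
relevant products integrable, then `X·Z ≤_C Y·Z`. -/
theorem convex_order_mul_indep
    {Ω : Type*} [MeasureSpace Ω] [IsProbabilityMeasure (volume : Measure Ω)]
    (X Y Z : Ω → ℝ)
    (hX : Integrable X) (hY : Integrable Y) (hZ : Integrable Z)
    (hXZindep : IndepFun Z X) (hYZindep : IndepFun Z Y)
    (hXZint : Integrable (fun ω => X ω * Z ω))
    (hYZint : Integrable (fun ω => Y ω * Z ω))
    (hmean : (∫ ω, X ω) = ∫ ω, Y ω)
    (hcalls : ∀ K : ℝ, ∫ ω, max (X ω - K) 0 ≤ ∫ ω, max (Y ω - K) 0) :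
    (∫ ω, X ω * Z ω) = (∫ ω, Y ω * Z ω) ∧
      ∀ K : ℝ, ∫ ω, max (X ω * Z ω - K) 0 ≤ ∫ ω, max (Y ω * Z ω - K) 0 := by
  set μ : Measure Ω := volume with hμ
  -- pushforward measures
  set PX : Measure ℝ := μ.map X with hPX
  set PY : Measure ℝ := μ.map Y with hPY
  set PZ : Measure ℝ := μ.map Z with hPZ
  haveI : IsProbabilityMeasure PX := Measure.isProbabilityMeasure_map hX.aemeasurable
  haveI : IsProbabilityMeasure PY := Measure.isProbabilityMeasure_map hY.aemeasurable
  haveI : IsProbabilityMeasure PZ := Measure.isProbabilityMeasure_map hZ.aemeasurable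
  have hPXint : Integrable id PX :=
    (integrable_map_measure aestronglyMeasurable_id hX.aemeasurable).mpr hX
  have hPYint : Integrable id PY :=
    (integrable_map_measure aestronglyMeasurable_id hY.aemeasurable).mpr hY
  have hmeanX : ∫ x, x ∂PX = ∫ ω, X ω :=
    integral_map hX.aemeasurable aestronglyMeasurable_id
  have hmeanY : ∫ x, x ∂PY = ∫ ω, Y ω :=
    integral_map hY.aemeasurable aestronglyMeasurable_id
  have hcallX : ∀ c : ℝ, ∫ x, max (x - c) 0 ∂PX = ∫ ω, max (X ω - c) 0 := fun c =>
    integral_map hX.aemeasurable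
      ((continuous_id.sub continuous_const).max continuous_const).aestronglyMeasurable
  have hcallY : ∀ c : ℝ, ∫ x, max (x - c) 0 ∂PY = ∫ ω, max (Y ω - c) 0 := fun c =>
    integral_map hY.aemeasurable
      ((continuous_id.sub continuous_const).max continuous_const).aestronglyMeasurable
  have hmeanPQ : ∫ x, x ∂PX = ∫ x, x ∂PY := by rw [hmeanX, hmeanY, hmean]
  have hcallsPQ : ∀ c : ℝ, ∫ x, max (x - c) 0 ∂PX ≤ ∫ x, max (x - c) 0 ∂PY := fun c => by
    rw [hcallX, hcallY]; exact hcalls c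
  constructor
  · -- equality of means
    have e1 : ∫ ω, Z ω * X ω ∂μ = (∫ ω, Z ω ∂μ) * ∫ ω, X ω ∂μ :=
      IndepFun.integral_fun_mul_eq_mul_integral hXZindep hZ.aestronglyMeasurable hX.aestronglyMeasurable
    have e2 : ∫ ω, Z ω * Y ω ∂μ = (∫ ω, Z ω ∂μ) * ∫ ω, Y ω ∂μ :=
      IndepFun.integral_fun_mul_eq_mul_integral hYZindep hZ.aestronglyMeasurable hY.aestronglyMeasurable
    simp_rw [mul_comm (X _) (Z _), mul_comm (Y _) (Z _)]
    rw [e1, e2, hmean]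
  · intro K
    -- the payoff as a function on the product space
    set f : ℝ × ℝ → ℝ := fun p => max (p.2 * p.1 - K) 0 with hf
    have hfc : Continuous f :=
      ((continuous_snd.mul continuous_fst).sub continuous_const).max continuous_const
    have key : ∀ (W : Ω → ℝ), Integrable W μ → Integrable (fun ω => W ω * Z ω) μ →
        IndepFun Z W μ →
        ∫ ω, max (W ω * Z ω - K) 0 ∂μ
          = ∫ z, ∫ x, max (x * z - K) 0 ∂(μ.map W) ∂PZ := by
      intro W hW hWZ hind
      have hpair : AEMeasurable (fun ω => (Z ω, W ω)) μ :=
        hZ.aemeasurable.prodMk hW.aemeasurable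
      have hmap : μ.map (fun ω => (Z ω, W ω)) = PZ.prod (μ.map W) :=
        (indepFun_iff_map_prod_eq_prod_map_map hZ.aemeasurable hW.aemeasurable).mp hind
      haveI : IsProbabilityMeasure (μ.map W) := Measure.isProbabilityMeasure_map hW.aemeasurable
      have hint : Integrable (fun ω => max (W ω * Z ω - K) 0) μ :=
        (hWZ.sub (integrable_const K)).sup (integrable_const 0)
      have hfint : Integrable f (PZ.prod (μ.map W)) := by
        rw [← hmap]
        exact (integrable_map_measure hfc.aestronglyMeasurable hpair).mpr hint
      calc ∫ ω, max (W ω * Z ω - K) 0 ∂μ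
          = ∫ ω, f ((fun ω => (Z ω, W ω)) ω) ∂μ := rfl
        _ = ∫ p, f p ∂(μ.map (fun ω => (Z ω, W ω))) :=
            (integral_map hpair hfc.aestronglyMeasurable).symm
        _ = ∫ p, f p ∂(PZ.prod (μ.map W)) := by rw [hmap]
        _ = ∫ z, ∫ x, f (z, x) ∂(μ.map W) ∂PZ := integral_prod f hfint
    have hmap : μ.map (fun ω => (Z ω, X ω)) = PZ.prod PX :=
      (indepFun_iff_map_prod_eq_prod_map_map hZ.aemeasurable hX.aemeasurable).mp hXZindep
    have hmapY : μ.map (fun ω => (Z ω, Y ω)) = PZ.prod PY :=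
      (indepFun_iff_map_prod_eq_prod_map_map hZ.aemeasurable hY.aemeasurable).mp hYZindep
    have hfintX : Integrable f (PZ.prod PX) := by
      rw [← hmap]
      exact (integrable_map_measure hfc.aestronglyMeasurable
        (hZ.aemeasurable.prodMk hX.aemeasurable)).mpr
        ((hXZint.sub (integrable_const K)).sup (integrable_const 0))
    have hfintY : Integrable f (PZ.prod PY) := by
      rw [← hmapY]
      exact (integrable_map_measure hfc.aestronglyMeasurable
        (hZ.aemeasurable.prodMk hY.aemeasurable)).mpr
        ((hYZint.sub (integrable_const K)).sup (integrable_const 0))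
    rw [key X hX hXZint hXZindep, key Y hY hYZint hYZindep]
    refine integral_mono hfintX.integral_prod_left hfintY.integral_prod_left fun z => ?_
    exact call_scaled_le hPXint hPYint hmeanPQ hcallsPQ z K
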